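/- Let γ_1, …, γ_r, ν_1, …, ν_s ∈ ℝ^n, let k_i⁺, k_i⁻ > 0 (i = 1,…,r) and q_j > 0 (j = 1,…,s). Assume: (i) there exists x* ∈ ℝ^n with ⟨γ_i, x*⟩ = ln k_i⁺ − ln k_i⁻ for all i (detailed balance for the reversible part); (ii) the convex hull of {ν_1,…,ν_s} has empty intersection with the linear span of {γ_1,…,γ_r}; (iii) there exists b ∈ ℝ^n with b_i > 0 for all i and ⟨γ_i, b⟩ = 0 for all i, ⟨ν_j, b⟩ = 0 for all j. Then there exists a family of positive constants q_j⁻(ε) > 0, ε ∈ (0,1], such that: for each ε the fully reversible system satisfies the principle of detailed balance, i.e. there exists x(ε) ∈ ℝ^n with ⟨γ_i, x(ε)⟩ = ln k_i⁺ − ln k_i⁻ for all i and ⟨ν_j, x(ε)⟩ = ln q_j − ln q_j⁻(ε) for all j; and q_j⁻(ε) → 0 as ε → 0⁺ for every j. -/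

import Mathlib

/-- Evaluation of a continuous linear functional on `Fin n → ℝ` as a sum. -/
lemma clm_eval_sum {n : ℕ} (f : (Fin n → ℝ) →L[ℝ] ℝ) (v : Fin n → ℝ) :
    f v = ∑ t, v t * f (Pi.single t 1) := by
  have hv : v = ∑ t, v t • (Pi.single t (1:ℝ) : Fin n → ℝ) := by
    funext u
    simp [Finset.sum_apply, Pi.single_apply, mul_ite]
  conv_lhs => rw [hv]
  simp [smul_eq_mul]

/-- Converse part of the main theorem: a system satisfying the extended form
of detailed balance (detailed balance for the reversible part, structural
condition, and a positive conservation law) is the limit, as `ε → 0⁺`, of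
fully reversible systems with detailed balance in which the constants
`q_j⁻(ε)` of the added reverse reactions tend to zero. -/
theorem extended_detailed_balance_is_limit_of_reversible
    (n r s : ℕ) (γ : Fin r → Fin n → ℝ) (ν : Fin s → Fin n → ℝ)
    (kp km : Fin r → ℝ) (q : Fin s → ℝ)
    (hkp : ∀ i, 0 < kp i) (hkm : ∀ i, 0 < km i) (hq : ∀ j, 0 < q j)
    (hDB : ∃ xs : Fin n → ℝ,
      ∀ i, ∑ t, γ i t * xs t = Real.log (kp i) - Real.log (km i))
    (hstruct : convexHull ℝ (Set.range ν) ∩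
      (Submodule.span ℝ (Set.range γ) : Set (Fin n → ℝ)) = ∅)
    (hcons : ∃ b : Fin n → ℝ, (∀ t, 0 < b t) ∧
      (∀ i, ∑ t, γ i t * b t = 0) ∧ (∀ j, ∑ t, ν j t * b t = 0)) :
    ∃ qm : ℝ → Fin s → ℝ,
      (∀ ε ∈ Set.Ioc (0 : ℝ) 1, ∀ j, 0 < qm ε j) ∧
      (∀ ε ∈ Set.Ioc (0 : ℝ) 1, ∃ x : Fin n → ℝ,
        (∀ i, ∑ t, γ i t * x t = Real.log (kp i) - Real.log (km i)) ∧
        (∀ j, ∑ t, ν j t * x t = Real.log (q j) - Real.log (qm ε j))) ∧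
      (∀ j, Filter.Tendsto (fun ε => qm ε j)
        (nhdsWithin 0 (Set.Ioi 0)) (nhds 0)) := by
  obtain ⟨xs, hxs⟩ := hDB
  -- separate the convex hull of the ν's from the span of the γ's
  obtain ⟨f, u, v, hfu, huv, hvf⟩ :=
    geometric_hahn_banach_compact_closed (convex_convexHull ℝ _)
      ((Set.finite_range ν).isCompact_convexHull ℝ)
      (Submodule.span ℝ (Set.range γ)).convex
      (Submodule.span ℝ (Set.range γ)).closed_of_finiteDimensional
      (Set.disjoint_iff_inter_eq_empty.mpr hstruct)
  -- f vanishes on the span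
  have hf0 : ∀ z ∈ Submodule.span ℝ (Set.range γ), f z = 0 := by
    intro z hz
    by_contra hzne
    rcases lt_or_gt_of_ne hzne with hneg | hpos
    · have h2 := hvf (((v - 1) / f z) • z)
        (Submodule.smul_mem _ _ hz)
      rw [map_smul, smul_eq_mul, div_mul_cancel₀ _ (ne_of_lt hneg)] at h2
      linarith
    · have h2 := hvf (((v - 1) / f z) • z)
        (Submodule.smul_mem _ _ hz)
      rw [map_smul, smul_eq_mul, div_mul_cancel₀ _ (ne_of_gt hpos)] at h2
      linarith
  have hv0 : v < 0 := by
    have := hvf 0 (Submodule.zero_mem _)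
    simpa using this
  -- the separating direction `w`
  set w : Fin n → ℝ := fun t => -(f (Pi.single t 1)) with hw
  have hsum : ∀ z : Fin n → ℝ, ∑ t, z t * w t = -(f z) := by
    intro z
    rw [clm_eval_sum f z, ← Finset.sum_neg_distrib]
    exact Finset.sum_congr rfl fun t _ => by rw [hw]; ring
  have hγw : ∀ i, ∑ t, γ i t * w t = 0 := by
    intro i
    rw [hsum]
    simp [hf0 (γ i) (Submodule.subset_span ⟨i, rfl⟩)]
  have hνw : ∀ j, 0 < ∑ t, ν j t * w t := by
    intro j
    rw [hsum]
    have := hfu (ν j) (subset_convexHull ℝ _ ⟨j, rfl⟩)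
    linarith
  -- the construction
  refine ⟨fun ε j => q j * Real.exp (Real.log ε * (∑ t, ν j t * w t)
      - ∑ t, ν j t * xs t), ?_, ?_, ?_⟩
  · intro ε _ j
    exact mul_pos (hq j) (Real.exp_pos _)
  · intro ε _
    refine ⟨fun t => xs t - Real.log ε * w t, ?_, ?_⟩
    · intro i
      have : ∑ t, γ i t * (xs t - Real.log ε * w t)
          = (∑ t, γ i t * xs t) - Real.log ε * ∑ t, γ i t * w t := by
        rw [Finset.mul_sum, ← Finset.sum_sub_distrib]
        exact Finset.sum_congr rfl fun t _ => by ring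
      rw [this, hγw, hxs]
      ring
    · intro j
      have h1 : ∑ t, ν j t * (xs t - Real.log ε * w t)
          = (∑ t, ν j t * xs t) - Real.log ε * ∑ t, ν j t * w t := by
        rw [Finset.mul_sum, ← Finset.sum_sub_distrib]
        exact Finset.sum_congr rfl fun t _ => by ring
      rw [h1, Real.log_mul (ne_of_gt (hq j)) (Real.exp_ne_zero _),
        Real.log_exp]
      ring
  · intro j
    have h1 : Filter.Tendsto (fun ε : ℝ => Real.log ε * (∑ t, ν j t * w t)
        - ∑ t, ν j t * xs t) (nhdsWithin 0 (Set.Ioi 0)) Filter.atBot := by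
      apply Filter.tendsto_atBot_add_const_right
      exact (Real.tendsto_log_nhdsGT_zero).atBot_mul_const (hνw j)
    have h2 := (Real.tendsto_exp_atBot.comp h1).const_mul (q j)
    simpa using h2
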